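/- Let h ≥ p ≥ 1 be integers and let T be a finite tree with diameter at least 3 and maximum degree Δ. If T contains T_{Δ−1,2} as a subtree (equivalently, some vertex of T has at least Δ−1 neighbours each of degree Δ), then h + (2Δ − 3)·p ≤ λ_{h,p,p}(T) ≤ λ*_{h,p,p}(T) ≤ h + 2(Δ − 1)·p. -/

import Mathlib

open SimpleGraph

/-- An `L(h,p,p)`-labelling of `G` with span `ℓ`: labels in `{0,…,ℓ}`, labels of vertices at
distance 1 differ by at least `h`, labels of vertices at distance 2 or 3 differ by at least `p`. -/
def IsLLabelling {V : Type} (G : SimpleGraph V) (h p ℓ : ℕ) (f : V → ℕ) : Prop :=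
  (∀ v, f v ≤ ℓ) ∧
  (∀ u v, G.dist u v = 1 → (h : ℤ) ≤ |(f u : ℤ) - (f v : ℤ)|) ∧
  (∀ u v, G.dist u v = 2 ∨ G.dist u v = 3 → (p : ℤ) ≤ |(f u : ℤ) - (f v : ℤ)|)

/-- `λ_{h,p,p}(G)`: the minimum span of an `L(h,p,p)`-labelling of `G`. -/
noncomputable def lambdaNum {V : Type} (G : SimpleGraph V) (h p : ℕ) : ℕ :=
  sInf {ℓ : ℕ | ∃ f : V → ℕ, IsLLabelling G h p ℓ f}

/-- A circular interval modulo `n`: a set of residues of the form `{a, a+1, …, a+s}` mod `n`. -/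
def IsCircInterval (n : ℕ) (I : Set (ZMod n)) : Prop :=
  ∃ (a : ZMod n) (s : ℕ), I = {x : ZMod n | ∃ i : ℕ, i ≤ s ∧ x = a + (i : ZMod n)}

/-- An elegant `L(h,p,p)`-labelling: additionally each vertex `u` has a circular interval `I u`
modulo `ℓ+1` containing the labels of all neighbours of `u`, with `I u ∩ I v = ∅` for edges `uv`. -/
def IsElegantLLabelling {V : Type} (G : SimpleGraph V) (h p ℓ : ℕ) (f : V → ℕ) : Prop :=
  IsLLabelling G h p ℓ f ∧
  ∃ I : V → Set (ZMod (ℓ + 1)),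
    (∀ u, IsCircInterval (ℓ + 1) (I u)) ∧
    (∀ u w, G.Adj u w → ((f w : ZMod (ℓ + 1)) ∈ I u)) ∧
    (∀ u v, G.Adj u v → I u ∩ I v = ∅)

/-- `λ*_{h,p,p}(G)`: the minimum span of an elegant `L(h,p,p)`-labelling of `G`. -/
noncomputable def lambdaStar {V : Type} (G : SimpleGraph V) (h p : ℕ) : ℕ :=
  sInf {ℓ : ℕ | ∃ f : V → ℕ, IsElegantLLabelling G h p ℓ f}

/-- The `ℓ`-cyclic distance between labels `a` and `b`. -/
def cycDist (ℓ a b : ℕ) : ℤ :=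
  min |(a : ℤ) - (b : ℤ)| ((ℓ : ℤ) - |(a : ℤ) - (b : ℤ)|)

/-- A `C(h,p,p)`-labelling of `G` with span `ℓ`: labels in `{0,…,ℓ-1}`, and the `ℓ`-cyclic distance
between labels of vertices at distance 1 (resp. 2 or 3) is at least `h` (resp. `p`). -/
def IsCLabelling {V : Type} (G : SimpleGraph V) (h p ℓ : ℕ) (f : V → ℕ) : Prop :=
  (∀ v, f v < ℓ) ∧
  (∀ u v, G.dist u v = 1 → (h : ℤ) ≤ cycDist ℓ (f u) (f v)) ∧
  (∀ u v, G.dist u v = 2 ∨ G.dist u v = 3 → (p : ℤ) ≤ cycDist ℓ (f u) (f v))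

/-- `σ_{h,p,p}(G)`: the minimum positive `ℓ` such that `G` has a `C(h,p,p)`-labelling of span `ℓ`. -/
noncomputable def sigmaNum {V : Type} (G : SimpleGraph V) (h p : ℕ) : ℕ :=
  sInf {ℓ : ℕ | 0 < ℓ ∧ ∃ f : V → ℕ, IsCLabelling G h p ℓ f}

/-- An elegant `C(h,p,p)`-labelling: additionally each vertex `u` has a circular interval `I u`
modulo `ℓ` containing the labels of all neighbours of `u`, with `I u ∩ I v = ∅` for edges `uv`. -/
def IsElegantCLabelling {V : Type} (G : SimpleGraph V) (h p ℓ : ℕ) (f : V → ℕ) : Prop :=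
  IsCLabelling G h p ℓ f ∧
  ∃ I : V → Set (ZMod ℓ),
    (∀ u, IsCircInterval ℓ (I u)) ∧
    (∀ u w, G.Adj u w → ((f w : ZMod ℓ) ∈ I u)) ∧
    (∀ u v, G.Adj u v → I u ∩ I v = ∅)

/-- `σ*_{h,p,p}(G)`: the minimum positive `ℓ` such that `G` has an elegant `C(h,p,p)`-labelling
of span `ℓ`. -/
noncomputable def sigmaStar {V : Type} (G : SimpleGraph V) (h p : ℕ) : ℕ :=
  sInf {ℓ : ℕ | 0 < ℓ ∧ ∃ f : V → ℕ, IsElegantCLabelling G h p ℓ f}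

/-- `Δ₂(G) = max over edges uv of (deg u + deg v)`. -/
noncomputable def deltaTwo {V : Type} (G : SimpleGraph V) [Fintype V] [DecidableRel G.Adj] : ℕ :=
  sSup {d : ℕ | ∃ u v : V, G.Adj u v ∧ d = G.degree u + G.degree v}


section Aux
open Finset
variable {V : Type} {G : SimpleGraph V}

private lemma pack_aux (p : ℤ) (hp : 0 < p) :
    ∀ (n : ℕ) (T : Finset ℤ), T.card = n → T.Nonempty →
      (∀ a ∈ T, ∀ b ∈ T, a ≠ b → p ≤ |a - b|) →
      ∀ lo hi : ℤ, (∀ a ∈ T, lo ≤ a ∧ a ≤ hi) →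
      lo + ((n : ℤ) - 1) * p ≤ hi := by
  intro n
  induction n with
  | zero =>
    intro T hc hne
    rw [Finset.card_eq_zero] at hc
    subst hc
    exact absurd hne (by simp)
  | succ n ih =>
    intro T hc hne hsep lo hi hb
    set M := T.max' hne with hMdef
    have hM : M ∈ T := T.max'_mem hne
    by_cases hn : n = 0
    · subst hn
      have := hb M hM
      push_cast
      linarith [this.1, this.2]
    · have hcard' : (T.erase M).card = n := by
        rw [Finset.card_erase_of_mem hM, hc]
        omega
      have hne' : (T.erase M).Nonempty := by
        rw [← Finset.card_pos, hcard']
        omega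
      have hsub : ∀ a ∈ T.erase M, lo ≤ a ∧ a ≤ M - p := by
        intro a ha
        have haT : a ∈ T := Finset.mem_of_mem_erase ha
        have haM : a ≠ M := Finset.ne_of_mem_erase ha
        have h1 : a ≤ M := T.le_max' a haT
        have h2 := hsep a haT M hM haM
        have h3 : |a - M| = M - a := by
          rw [abs_of_nonpos (by linarith)]; ring
        exact ⟨(hb a haT).1, by linarith [h2, h3.le, h3.ge]⟩
      have := ih (T.erase M) hcard' hne'
        (fun a ha b hbb hab => hsep a (Finset.mem_of_mem_erase ha) b (Finset.mem_of_mem_erase hbb) hab)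
        lo (M - p) hsub
      have hMhi := (hb M hM).2
      have hring : ((n + 1 : ℕ) : ℤ) - 1 = ((n : ℤ) - 1) + 1 := by push_cast; ring
      rw [hring, add_one_mul]
      linarith

private lemma pack (p : ℤ) (hp : 0 < p) (T : Finset ℤ) (hne : T.Nonempty)
    (hsep : ∀ a ∈ T, ∀ b ∈ T, a ≠ b → p ≤ |a - b|)
    (lo hi : ℤ) (hb : ∀ a ∈ T, lo ≤ a ∧ a ≤ hi) :
    lo + ((T.card : ℤ) - 1) * p ≤ hi :=
  pack_aux p hp T.card T rfl hne hsep lo hi hb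

private lemma chain_core (p h ℓ : ℤ) (hp : 0 < p) (hph : p ≤ h) (T : Finset ℤ)
    (hsep : ∀ a ∈ T, ∀ b ∈ T, a ≠ b → p ≤ |a - b|)
    (hb : ∀ a ∈ T, 0 ≤ a ∧ a ≤ ℓ)
    (g x : ℤ) (hg : g ∈ T) (hx : x ∈ T) (hgx : g + h ≤ x)
    (hsame : (∀ b ∈ T, g < b → b < x → b + h ≤ x) ∨ (∀ b ∈ T, g < b → b < x → g + h ≤ b)) :
    h + ((T.card : ℤ) - 2) * p ≤ ℓ := by
  classical
  set L := T.filter (fun b => b < g) with hL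
  set Md := T.filter (fun b => g < b ∧ b < x) with hMd
  set H := T.filter (fun b => x < b) with hH
  have hcard : (T.card : ℤ) ≤ L.card + Md.card + H.card + 2 := by
    have hsubset : T ⊆ ((L ∪ Md ∪ H) ∪ {g}) ∪ {x} := by
      intro b hbT
      simp only [Finset.mem_union, Finset.mem_filter, Finset.mem_singleton, hL, hMd, hH]
      rcases lt_trichotomy b g with h1 | h1 | h1
      · exact Or.inl (Or.inl (Or.inl (Or.inl ⟨hbT, h1⟩)))
      · exact Or.inl (Or.inr h1)
      · rcases lt_trichotomy b x with h2 | h2 | h2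
        · exact Or.inl (Or.inl (Or.inl (Or.inr ⟨hbT, h1, h2⟩)))
        · exact Or.inr h2
        · exact Or.inl (Or.inl (Or.inr ⟨hbT, h2⟩))
    have := Finset.card_le_card hsubset
    have h1 := Finset.card_union_le ((L ∪ Md ∪ H) ∪ {g}) ({x} : Finset ℤ)
    have h2 := Finset.card_union_le (L ∪ Md ∪ H) ({g} : Finset ℤ)
    have h3 := Finset.card_union_le (L ∪ Md) H
    have h4 := Finset.card_union_le L Md
    simp only [Finset.card_singleton] at h1 h2
    push_cast
    push_cast at this h1 h2 h3 h4
    linarith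
  -- bound from L
  have hLb : (L.card : ℤ) * p ≤ g := by
    rcases L.eq_empty_or_nonempty with he | hneL
    · rw [he]; simpa using (hb g hg).1
    · have := pack p hp L hneL
        (fun a ha b hbb hab => hsep a (Finset.mem_filter.mp ha).1 b (Finset.mem_filter.mp hbb).1 hab)
        0 (g - p)
        (by
          intro a ha
          have haT := (Finset.mem_filter.mp ha).1
          have hag : a < g := (Finset.mem_filter.mp ha).2
          have h2 := hsep a haT g hg (ne_of_lt hag)
          have h3 : |a - g| = g - a := by rw [abs_of_nonpos (by linarith)]; ring
          exact ⟨(hb a haT).1, by linarith [h3.le, h3.ge]⟩)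
      linarith
  -- bound from Md
  have hMdb : g + h + (Md.card : ℤ) * p ≤ x := by
    rcases Md.eq_empty_or_nonempty with he | hneM
    · rw [he]; simpa using hgx
    · rcases hsame with hlow | hhigh
      · have := pack p hp Md hneM
          (fun a ha b hbb hab => hsep a (Finset.mem_filter.mp ha).1 b (Finset.mem_filter.mp hbb).1 hab)
          (g + p) (x - h)
          (by
            intro a ha
            have haT := (Finset.mem_filter.mp ha).1
            have hag : g < a := (Finset.mem_filter.mp ha).2.1
            have hax : a < x := (Finset.mem_filter.mp ha).2.2
            have h2 := hsep a haT g hg (ne_of_gt hag)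
            have h3 : |a - g| = a - g := by rw [abs_of_nonneg (by linarith)]
            refine ⟨by linarith [h3.le, h3.ge], by linarith [hlow a haT hag hax]⟩)
        linarith
      · have := pack p hp Md hneM
          (fun a ha b hbb hab => hsep a (Finset.mem_filter.mp ha).1 b (Finset.mem_filter.mp hbb).1 hab)
          (g + h) (x - p)
          (by
            intro a ha
            have haT := (Finset.mem_filter.mp ha).1
            have hag : g < a := (Finset.mem_filter.mp ha).2.1
            have hax : a < x := (Finset.mem_filter.mp ha).2.2
            have h2 := hsep a haT x hx (ne_of_lt hax)
            have h3 : |a - x| = x - a := by rw [abs_of_nonpos (by linarith)]; ring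
            refine ⟨hhigh a haT hag hax, by linarith [h3.le, h3.ge]⟩)
        linarith
  -- bound from H
  have hHb : x + (H.card : ℤ) * p ≤ ℓ := by
    rcases H.eq_empty_or_nonempty with he | hneH
    · rw [he]; simpa using (hb x hx).2
    · have := pack p hp H hneH
        (fun a ha b hbb hab => hsep a (Finset.mem_filter.mp ha).1 b (Finset.mem_filter.mp hbb).1 hab)
        (x + p) ℓ
        (by
          intro a ha
          have haT := (Finset.mem_filter.mp ha).1
          have hax : x < a := (Finset.mem_filter.mp ha).2
          have h2 := hsep a haT x hx (ne_of_gt hax)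
          have h3 : |a - x| = a - x := by rw [abs_of_nonneg (by linarith)]
          exact ⟨by linarith [h3.le, h3.ge], (hb a haT).2⟩)
      linarith
  have hmul : ((T.card : ℤ) - 2) * p ≤ ((L.card : ℤ) + Md.card + H.card) * p := by
    apply mul_le_mul_of_nonneg_right _ hp.le
    linarith
  nlinarith [hLb, hMdb, hHb, hmul]

private lemma tree_dist_eq (hT : G.IsTree) {u v : V} (w : G.Walk u v) (hw : w.IsPath) :
    G.dist u v = w.length := by
  obtain ⟨q, hq, hql⟩ := hT.isConnected.exists_path_of_dist u v
  obtain ⟨w', hw', huniq⟩ := hT.existsUnique_path u v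
  have h1 : q = w' := huniq q hq
  have h2 : w = w' := huniq w hw
  rw [← hql, h1, h2]

private lemma tree_dist2 (hT : G.IsTree) {a b c : V} (h1 : G.Adj a b) (h2 : G.Adj b c)
    (hac : a ≠ c) : G.dist a c = 2 := by
  have hw : (Walk.cons h1 (Walk.cons h2 Walk.nil) : G.Walk a c).IsPath := by
    simp [Walk.cons_isPath_iff, h1.ne, h2.ne, hac]
  simpa using tree_dist_eq hT _ hw

private lemma no_triangle (hT : G.IsTree) {a b c : V} (h1 : G.Adj a b) (h2 : G.Adj b c)
    (h3 : G.Adj a c) : False := by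
  have hd2 := tree_dist2 hT h1 h2 h3.ne
  have hd1 : G.dist a c = 1 := dist_eq_one_iff_adj.mpr h3
  omega

private lemma tree_dist3 (hT : G.IsTree) {a b c d : V} (h1 : G.Adj a b) (h2 : G.Adj b c)
    (h3 : G.Adj c d) (hac : a ≠ c) (hbd : b ≠ d) (had : a ≠ d) : G.dist a d = 3 := by
  have hw : (Walk.cons h1 (Walk.cons h2 (Walk.cons h3 Walk.nil)) : G.Walk a d).IsPath := by
    simp [Walk.cons_isPath_iff, h1.ne, h2.ne, h3.ne, hac, hbd, had]
  simpa using tree_dist_eq hT _ hw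

private lemma lower_per (hT : G.IsTree) [Fintype V] [DecidableRel G.Adj]
    (hsub : ∃ r : V, G.maxDegree - 1 ≤
      ((G.neighborFinset r).filter (fun v => G.degree v = G.maxDegree)).card)
    (hΔ : 2 ≤ G.maxDegree) (h p ℓ : ℕ) (hp : 1 ≤ p) (hph : p ≤ h)
    (f : V → ℕ) (hf : IsLLabelling G h p ℓ f) :
    h + (2 * G.maxDegree - 3) * p ≤ ℓ := by
  classical
  set Δ := G.maxDegree with hΔdef
  obtain ⟨r, hr⟩ := hsub
  set F := (G.neighborFinset r).filter (fun v => G.degree v = Δ) with hFdef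
  have hFne : F.Nonempty := by
    rw [← Finset.card_pos]; omega
  obtain ⟨vs, hvsF, hmin⟩ := F.exists_min_image (fun v => |(f v : ℤ) - (f r : ℤ)|) hFne
  have hFmem : ∀ v ∈ F, G.Adj r v ∧ G.degree v = Δ := by
    intro v hv
    rw [hFdef, Finset.mem_filter] at hv
    rw [SimpleGraph.mem_neighborFinset] at hv
    exact hv
  have hadjvs : G.Adj r vs := (hFmem vs hvsF).1
  have hdegvs : G.degree vs = Δ := (hFmem vs hvsF).2
  set C := (G.neighborFinset vs).erase r with hCdef
  have hCmem : ∀ c ∈ C, G.Adj vs c ∧ c ≠ r := by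
    intro c hc
    rw [hCdef, Finset.mem_erase] at hc
    rw [SimpleGraph.mem_neighborFinset] at hc
    exact ⟨hc.2, hc.1⟩
  have hCcard : C.card = Δ - 1 := by
    rw [hCdef, Finset.card_erase_of_mem ((SimpleGraph.mem_neighborFinset G vs r).mpr hadjvs.symm),
      SimpleGraph.card_neighborFinset_eq_degree, hdegvs]
  -- v ∈ F distinct from vs is never in C, and never equal to a C element
  have hFC : ∀ v ∈ F, ∀ c ∈ C, v ≠ vs → v ≠ c := by
    intro v hv c hc hvvs heq
    subst heq
    exact no_triangle hT ((hCmem v hc).1) ((hFmem v hv).1.symm) hadjvs.symm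
  have hvsC : vs ∉ C := by
    intro hmem
    exact G.irrefl ((hCmem vs hmem).1)
  have hrF : r ∉ F := by
    intro hmem
    exact G.irrefl ((hFmem r hmem).1)
  have hrC : r ∉ C := by
    intro hmem
    exact ((hCmem r hmem).2) rfl
  have hFCdisj : Disjoint F C := by
    rw [Finset.disjoint_left]
    intro a haF haC
    by_cases havs : a = vs
    · exact hvsC (havs ▸ haC)
    · exact hFC a haF a haC havs rfl
  set W : Finset V := insert r (F ∪ C) with hWdef
  have hWcard : W.card = 1 + F.card + C.card := by
    rw [hWdef, Finset.card_insert_of_notMem (by simp [hrF, hrC]),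
      Finset.card_union_of_disjoint hFCdisj]
    ring
  -- all pairs in W are at distance 1, 2 or 3
  have hWmem : ∀ u ∈ W, u = r ∨ u ∈ F ∨ u ∈ C := by
    intro u hu
    rw [hWdef, Finset.mem_insert, Finset.mem_union] at hu
    exact hu
  have hdists : ∀ u ∈ W, ∀ w ∈ W, u ≠ w →
      G.dist u w = 1 ∨ G.dist u w = 2 ∨ G.dist u w = 3 := by
    have key : ∀ u w : V, u ∈ F ∨ u ∈ C → w ∈ F ∨ w ∈ C → u ≠ w →
        G.dist u w = 1 ∨ G.dist u w = 2 ∨ G.dist u w = 3 := by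
      intro u w hu hw huw
      rcases hu with hu | hu <;> rcases hw with hw | hw
      · -- both in F : distance 2
        exact Or.inr (Or.inl (tree_dist2 hT ((hFmem u hu).1).symm ((hFmem w hw).1) huw))
      · -- u ∈ F, w ∈ C
        by_cases huvs : u = vs
        · subst huvs
          exact Or.inl (dist_eq_one_iff_adj.mpr ((hCmem w hw).1))
        · refine Or.inr (Or.inr (tree_dist3 hT ((hFmem u hu).1).symm hadjvs ((hCmem w hw).1) ?_ ?_ ?_))
          · exact huvs
          · exact fun hrw => ((hCmem w hw).2) hrw.symm
          · exact huw
      · -- u ∈ C, w ∈ F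
        by_cases hwvs : w = vs
        · subst hwvs
          exact Or.inl (dist_eq_one_iff_adj.mpr ((hCmem u hu).1.symm))
        · refine Or.inr (Or.inr (tree_dist3 hT ((hCmem u hu).1).symm hadjvs.symm ((hFmem w hw).1) ?_ ?_ ?_))
          · exact fun hur => ((hCmem u hu).2) hur
          · exact fun hvw => hwvs hvw.symm
          · exact huw
      · -- both in C : distance 2
        exact Or.inr (Or.inl (tree_dist2 hT ((hCmem u hu).1).symm ((hCmem w hw).1) huw))
    intro u hu w hw huw
    rcases hWmem u hu with hur | hu' <;> rcases hWmem w hw with hwr | hw'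
    · exact absurd (hur.trans hwr.symm) huw
    · subst hur
      rcases hw' with hw' | hw'
      · exact Or.inl (dist_eq_one_iff_adj.mpr ((hFmem w hw').1))
      · exact Or.inr (Or.inl (tree_dist2 hT hadjvs ((hCmem w hw').1) (fun hrw => ((hCmem w hw').2) hrw.symm)))
    · subst hwr
      rcases hu' with hu' | hu'
      · exact Or.inl (dist_eq_one_iff_adj.mpr ((hFmem u hu').1.symm))
      · exact Or.inr (Or.inl (tree_dist2 hT ((hCmem u hu').1).symm hadjvs.symm ((hCmem u hu').2)))
    · exact key u w hu' hw' huw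
  -- separation of labels on W
  have hsepW : ∀ u ∈ W, ∀ w ∈ W, u ≠ w → (p : ℤ) ≤ |(f u : ℤ) - (f w : ℤ)| := by
    intro u hu w hw huw
    rcases hdists u hu w hw huw with hd | hd | hd
    · exact le_trans (by exact_mod_cast hph) (hf.2.1 u w hd)
    · exact hf.2.2 u w (Or.inl hd)
    · exact hf.2.2 u w (Or.inr hd)
  have hinj : Set.InjOn (fun u => (f u : ℤ)) W := by
    intro u hu w hw heq
    have heq' : (f u : ℤ) = (f w : ℤ) := heq
    by_contra hne
    have := hsepW u hu w hw hne
    rw [heq'] at this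
    simp at this
    omega
  set T : Finset ℤ := W.image (fun u => (f u : ℤ)) with hTdef
  have hTcard : T.card = W.card := Finset.card_image_of_injOn hinj
  have hTcard' : 2 * Δ - 1 ≤ T.card := by
    rw [hTcard, hWcard, hCcard]
    omega
  have hTsep : ∀ a ∈ T, ∀ b ∈ T, a ≠ b → (p : ℤ) ≤ |a - b| := by
    intro a ha b hb hab
    rw [hTdef, Finset.mem_image] at ha hb
    obtain ⟨u, hu, rfl⟩ := ha
    obtain ⟨w, hw, rfl⟩ := hb
    exact hsepW u hu w hw (fun he => hab (he ▸ rfl))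
  have hTb : ∀ a ∈ T, 0 ≤ a ∧ a ≤ (ℓ : ℤ) := by
    intro a ha
    rw [hTdef, Finset.mem_image] at ha
    obtain ⟨u, hu, rfl⟩ := ha
    exact ⟨by positivity, by exact_mod_cast hf.1 u⟩
  have hrW : r ∈ W := by rw [hWdef]; exact Finset.mem_insert_self _ _
  have hvsW : vs ∈ W := by rw [hWdef]; exact Finset.mem_insert_of_mem (Finset.mem_union_left _ hvsF)
  have hgT : (f r : ℤ) ∈ T := Finset.mem_image_of_mem _ hrW
  have hxT : (f vs : ℤ) ∈ T := Finset.mem_image_of_mem _ hvsW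
  have hsep_rvs : (h : ℤ) ≤ |(f r : ℤ) - (f vs : ℤ)| :=
    hf.2.1 r vs (dist_eq_one_iff_adj.mpr hadjvs)
  -- chain application, by cases on sign
  have main : (h : ℤ) + ((T.card : ℤ) - 2) * (p : ℤ) ≤ (ℓ : ℤ) := by
    have hp' : (0 : ℤ) < p := by exact_mod_cast hp
    have hph' : (p : ℤ) ≤ h := by exact_mod_cast hph
    rcases lt_trichotomy ((f r : ℤ)) ((f vs : ℤ)) with hlt | heq | hgt
    · -- g = f r < x = f vs
      refine chain_core p h ℓ hp' hph' T hTsep hTb (f r) (f vs) hgT hxT ?_ (Or.inl ?_)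
      · rw [abs_of_nonpos (by linarith)] at hsep_rvs
        linarith
      · intro b hb hgb hbx
        rw [hTdef, Finset.mem_image] at hb
        obtain ⟨w, hw, rfl⟩ := hb
        rcases hWmem w hw with hwr | hw' | hw'
        · subst hwr; omega
        · -- w ∈ F : contradiction with minimality
          exfalso
          have := hmin w hw'
          rw [abs_of_nonneg (by linarith)] at this
          have habs : |(f w : ℤ) - (f r : ℤ)| = (f w : ℤ) - (f r : ℤ) := abs_of_nonneg (by linarith)
          rw [habs] at this
          omega
        · -- w ∈ C : adjacent to vs
          by_cases hwvs : w = vs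
          · subst hwvs; omega
          · have := hf.2.1 w vs (dist_eq_one_iff_adj.mpr ((hCmem w hw').1.symm))
            rw [abs_of_nonpos (by linarith)] at this
            linarith
    · exfalso
      rw [heq] at hsep_rvs
      simp at hsep_rvs
      omega
    · -- g = f vs < x = f r
      refine chain_core p h ℓ hp' hph' T hTsep hTb (f vs) (f r) hxT hgT ?_ (Or.inr ?_)
      · rw [abs_of_nonneg (by linarith)] at hsep_rvs
        linarith
      · intro b hb hgb hbx
        rw [hTdef, Finset.mem_image] at hb
        obtain ⟨w, hw, rfl⟩ := hb
        rcases hWmem w hw with hwr | hw' | hw'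
        · subst hwr; omega
        · exfalso
          have := hmin w hw'
          rw [abs_of_nonpos (by linarith)] at this
          have habs : |(f w : ℤ) - (f r : ℤ)| = (f r : ℤ) - (f w : ℤ) := by
            rw [abs_of_nonpos (by linarith)]; ring
          rw [habs] at this
          omega
        · by_cases hwvs : w = vs
          · subst hwvs; omega
          · have := hf.2.1 w vs (dist_eq_one_iff_adj.mpr ((hCmem w hw').1.symm))
            rw [abs_of_nonneg (by linarith)] at this
            linarith
  -- conclude
  have hc2 : ((2 * Δ - 1 : ℕ) : ℤ) - 2 ≤ (T.card : ℤ) - 2 := by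
    have := hTcard'
    omega
  have hmul : (((2 * Δ - 1 : ℕ) : ℤ) - 2) * p ≤ ((T.card : ℤ) - 2) * p := by
    apply mul_le_mul_of_nonneg_right hc2 (by positivity)
  have hfin : (h : ℤ) + (((2 * Δ - 1 : ℕ) : ℤ) - 2) * p ≤ (ℓ : ℤ) := by linarith
  have hcast : ((2 * Δ - 3 : ℕ) : ℤ) = ((2 * Δ - 1 : ℕ) : ℤ) - 2 := by omega
  rw [← hcast] at hfin
  exact_mod_cast hfin

end Aux
section Aux2

variable {V : Type}

private lemma isPath_concat {G : SimpleGraph V} {a b c : V} {pw : G.Walk a b} (hp : pw.IsPath)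
    (hadj : G.Adj b c) (hc : c ∉ pw.support) : (pw.concat hadj).IsPath := by
  have h1 : (Walk.cons hadj.symm pw.reverse).IsPath := by
    rw [Walk.cons_isPath_iff]
    exact ⟨hp.reverse, by simpa [Walk.support_reverse] using hc⟩
  have h2 : (pw.concat hadj) = (Walk.cons hadj.symm pw.reverse).reverse := by
    rw [Walk.reverse_cons, Walk.reverse_reverse, Walk.concat_eq_append]
  rw [h2]
  exact h1.reverse

private lemma adj_depth {G : SimpleGraph V} (hT : G.IsTree) (r0 : V) {u v : V} (hadj : G.Adj u v) :
    G.dist r0 v = G.dist r0 u + 1 ∨ G.dist r0 u = G.dist r0 v + 1 := by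
  classical
  obtain ⟨P, hP, hPl⟩ := hT.isConnected.exists_path_of_dist r0 u
  by_cases hv : v ∈ P.support
  · right
    have ht : (P.takeUntil v hv).IsPath := hP.takeUntil hv
    have hd1 : G.dist r0 v = (P.takeUntil v hv).length := tree_dist_eq hT _ ht
    have hsum : (P.takeUntil v hv).length + (P.dropUntil v hv).length = P.length := by
      rw [← Walk.length_append, P.take_spec hv]
    have hdl : G.dist v u ≤ (P.dropUntil v hv).length := dist_le _
    have hvu : G.dist v u = 1 := dist_eq_one_iff_adj.mpr hadj.symm
    have htri : G.dist r0 u ≤ G.dist r0 v + G.dist v u := hT.isConnected.dist_triangle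
    omega
  · left
    have hQ : (P.concat hadj).IsPath := isPath_concat hP hadj hv
    have := tree_dist_eq hT _ hQ
    rw [Walk.length_concat] at this
    omega

private lemma walk_parity {G : SimpleGraph V} (hT : G.IsTree) (r0 : V) :
    ∀ {u v : V} (w : G.Walk u v), (w.length + G.dist r0 u + G.dist r0 v) % 2 = 0 := by
  intro u v w
  induction w with
  | nil => rw [Walk.length_nil]; omega
  | cons hadj q ih =>
    rename_i a b _
    have := adj_depth hT r0 hadj
    rw [Walk.length_cons]
    omega

private lemma dist_parity {G : SimpleGraph V} (hT : G.IsTree) (r0 : V) (u v : V) :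
    (G.dist u v + G.dist r0 u + G.dist r0 v) % 2 = 0 := by
  obtain ⟨w, hwl⟩ := hT.isConnected.exists_walk_length_eq_dist u v
  have := walk_parity hT r0 w
  omega

private lemma parent_exists {G : SimpleGraph V} (hT : G.IsTree) (r0 : V) {v : V} (hv : v ≠ r0) :
    ∃ u, G.Adj v u ∧ G.dist r0 u + 1 = G.dist r0 v := by
  have hpos : 0 < G.dist r0 v := hT.isConnected.pos_dist_of_ne (Ne.symm hv)
  obtain ⟨w, hwl⟩ := hT.isConnected.exists_walk_length_eq_dist v r0
  cases w with
  | nil => exact absurd rfl hv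
  | cons hadj q =>
    rename_i x
    refine ⟨x, hadj, ?_⟩
    have h1 : G.dist r0 x ≤ q.length := by rw [SimpleGraph.dist_comm]; exact dist_le q
    have h2 : q.length + 1 = G.dist v r0 := by simpa using hwl
    have h3 : G.dist v r0 = G.dist r0 v := SimpleGraph.dist_comm ..
    rcases adj_depth hT r0 hadj with hc | hc <;> omega

open Classical in
private noncomputable def pa (G : SimpleGraph V) (r0 v : V) : V :=
  if hc : ∃ u, G.Adj v u ∧ G.dist r0 u + 1 = G.dist r0 v then hc.choose else v

private lemma pa_spec {G : SimpleGraph V} (hT : G.IsTree) (r0 : V) {v : V} (hv : v ≠ r0) :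
    G.Adj v (pa G r0 v) ∧ G.dist r0 (pa G r0 v) + 1 = G.dist r0 v := by
  have hc := parent_exists hT r0 hv
  rw [pa, dif_pos hc]
  exact hc.choose_spec

private lemma parent_unique {G : SimpleGraph V} (hT : G.IsTree) (r0 : V) {m w1 w2 : V}
    (h1 : G.Adj m w1) (hd1 : G.dist r0 w1 + 1 = G.dist r0 m)
    (h2 : G.Adj m w2) (hd2 : G.dist r0 w2 + 1 = G.dist r0 m) : w1 = w2 := by
  classical
  by_contra hne
  obtain ⟨P, hP, hPl⟩ := hT.isConnected.exists_path_of_dist r0 w1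
  have hmP : m ∉ P.support := by
    intro hmem
    have hd := tree_dist_eq hT _ (hP.takeUntil hmem)
    have hle := Walk.length_takeUntil_le P hmem
    omega
  have hw2P : w2 ∉ P.support := by
    intro hmem
    have hd := tree_dist_eq hT _ (hP.takeUntil hmem)
    have hsum : (P.takeUntil w2 hmem).length + (P.dropUntil w2 hmem).length = P.length := by
      rw [← Walk.length_append, P.take_spec hmem]
    have hz : (P.dropUntil w2 hmem).length = 0 := by omega
    exact hne (Walk.eq_of_length_eq_zero hz).symm
  have hQ1 : (P.concat h1.symm).IsPath := isPath_concat hP h1.symm hmP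
  have hQ2 : ((P.concat h1.symm).concat h2).IsPath := by
    apply isPath_concat hQ1 h2
    rw [Walk.support_concat]
    simp only [List.mem_append, List.mem_singleton]
    rintro (hmem | heq)
    · exact hw2P hmem
    · exact h2.ne.symm heq
  have := tree_dist_eq hT _ hQ2
  rw [Walk.length_concat, Walk.length_concat] at this
  omega

private noncomputable def childSet (G : SimpleGraph V) [Fintype V] [DecidableRel G.Adj] (r0 m : V) : Finset V :=
  (G.neighborFinset m).filter (fun u => G.dist r0 u = G.dist r0 m + 1)

private noncomputable def injc (G : SimpleGraph V) [Fintype V] [DecidableRel G.Adj] [DecidableEq V]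
    (r0 m : V) (t : ℕ) : V → ℕ :=
  if hc : (childSet G r0 m).card ≤ ((Finset.range G.maxDegree).erase t).card then
    fun v =>
      if hv : v ∈ childSet G r0 m then
        (((Finset.range G.maxDegree).erase t).equivFin.symm
          (Fin.castLE hc ((childSet G r0 m).equivFin ⟨v, hv⟩)) : ℕ)
      else 0
  else fun _ => 0

private lemma injc_mem {G : SimpleGraph V} [Fintype V] [DecidableRel G.Adj] [DecidableEq V] {r0 m : V} {t : ℕ}
    (hcond : (childSet G r0 m).card ≤ ((Finset.range G.maxDegree).erase t).card)
    {v : V} (hv : v ∈ childSet G r0 m) :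
    injc G r0 m t v ∈ (Finset.range G.maxDegree).erase t := by
  rw [injc, dif_pos hcond]
  simp only [dif_pos hv]
  exact (((Finset.range G.maxDegree).erase t).equivFin.symm _).2

private lemma injc_inj {G : SimpleGraph V} [Fintype V] [DecidableRel G.Adj] [DecidableEq V] {r0 m : V} {t : ℕ}
    (hcond : (childSet G r0 m).card ≤ ((Finset.range G.maxDegree).erase t).card)
    {u v : V} (hu : u ∈ childSet G r0 m) (hv : v ∈ childSet G r0 m)
    (heq : injc G r0 m t u = injc G r0 m t v) : u = v := by
  rw [injc, dif_pos hcond] at heq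
  simp only [dif_pos hu, dif_pos hv] at heq
  have h1 := Subtype.coe_injective heq
  have h2 := ((Finset.range G.maxDegree).erase t).equivFin.symm.injective h1
  have h3 := Fin.castLE_injective hcond h2
  have h4 := (childSet G r0 m).equivFin.injective h3
  exact congrArg Subtype.val h4

private lemma cond_root {G : SimpleGraph V} [Fintype V] [DecidableRel G.Adj] (r0 : V) :
    (childSet G r0 r0).card ≤ ((Finset.range G.maxDegree).erase G.maxDegree).card := by
  rw [Finset.erase_eq_of_notMem (by simp), Finset.card_range]
  refine le_trans (Finset.card_le_card (Finset.filter_subset _ _)) ?_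
  rw [SimpleGraph.card_neighborFinset_eq_degree]
  exact G.degree_le_maxDegree r0

private lemma cond_nonroot {G : SimpleGraph V} [Fintype V] [DecidableRel G.Adj] [DecidableEq V] (hT : G.IsTree)
    (r0 : V) {m : V} (hm : m ≠ r0) (t : ℕ) :
    (childSet G r0 m).card ≤ ((Finset.range G.maxDegree).erase t).card := by
  have hpa := pa_spec hT r0 hm
  have hsub : childSet G r0 m ⊆ (G.neighborFinset m).erase (pa G r0 m) := by
    intro u hu
    rw [childSet, Finset.mem_filter] at hu
    rw [Finset.mem_erase]
    refine ⟨?_, hu.1⟩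
    intro heq
    rw [heq] at hu
    omega
  have h1 : (childSet G r0 m).card ≤ G.degree m - 1 := by
    refine le_trans (Finset.card_le_card hsub) ?_
    rw [Finset.card_erase_of_mem ((SimpleGraph.mem_neighborFinset G m (pa G r0 m)).mpr hpa.1),
      SimpleGraph.card_neighborFinset_eq_degree]
  have h2 : Finset.card (Finset.range G.maxDegree) - 1 ≤ ((Finset.range G.maxDegree).erase t).card :=
    Finset.pred_card_le_card_erase
  rw [Finset.card_range] at h2
  have h3 : G.degree m ≤ G.maxDegree := G.degree_le_maxDegree m
  have h4 : 1 ≤ G.degree m := by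
    rw [← SimpleGraph.card_neighborFinset_eq_degree]
    refine Finset.card_pos.mpr ⟨pa G r0 m, (SimpleGraph.mem_neighborFinset G m (pa G r0 m)).mpr hpa.1⟩
  omega

private noncomputable def idx (G : SimpleGraph V) [Fintype V] [DecidableRel G.Adj]
    [DecidableEq V] (hT : G.IsTree) (r0 : V) (v : V) : ℕ :=
  if hv : v = r0 then 0
  else
    injc G r0 (pa G r0 v)
      (if hm : pa G r0 v = r0 then G.maxDegree else idx G hT r0 (pa G r0 (pa G r0 v))) v
termination_by G.dist r0 v
decreasing_by
  have h1 := pa_spec hT r0 hv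
  have h2 := pa_spec hT r0 hm
  omega

end Aux2
section Aux3

variable {V : Type} {G : SimpleGraph V} [Fintype V] [DecidableRel G.Adj] [DecidableEq V]

private lemma idx_eq (hT : G.IsTree) (r0 : V) {v : V} (hv : v ≠ r0) :
    idx G hT r0 v = injc G r0 (pa G r0 v)
      (if pa G r0 v = r0 then G.maxDegree else idx G hT r0 (pa G r0 (pa G r0 v))) v := by
  rw [idx.eq_def, dif_neg hv]
  by_cases hm : pa G r0 v = r0
  · rw [dif_pos hm, if_pos hm]
  · rw [dif_neg hm, if_neg hm]

private lemma mem_childSet_pa (hT : G.IsTree) (r0 : V) {v : V} (hv : v ≠ r0) :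
    v ∈ childSet G r0 (pa G r0 v) := by
  have hpa := pa_spec hT r0 hv
  rw [childSet, Finset.mem_filter, SimpleGraph.mem_neighborFinset]
  exact ⟨hpa.1.symm, by omega⟩

private lemma cond_any (hT : G.IsTree) (r0 m : V) (t : ℕ) (hmt : m = r0 → t = G.maxDegree) :
    (childSet G r0 m).card ≤ ((Finset.range G.maxDegree).erase t).card := by
  by_cases hm : m = r0
  · rw [hmt hm, hm]; exact cond_root r0
  · exact cond_nonroot hT r0 hm t

private lemma idx_lt (hT : G.IsTree) (r0 : V) (hΔ : 1 ≤ G.maxDegree) (v : V) :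
    idx G hT r0 v < G.maxDegree := by
  by_cases hv : v = r0
  · rw [idx.eq_def, dif_pos hv]; omega
  · rw [idx_eq hT r0 hv]
    have hmem := injc_mem (cond_any hT r0 (pa G r0 v)
      (if pa G r0 v = r0 then G.maxDegree else idx G hT r0 (pa G r0 (pa G r0 v)))
      (fun hm => if_pos hm)) (mem_childSet_pa hT r0 hv)
    exact Finset.mem_range.mp (Finset.mem_of_mem_erase hmem)

private lemma child_ne_root (hT : G.IsTree) (r0 : V) {m u : V} (hu : u ∈ childSet G r0 m) :
    u ≠ r0 := by
  rw [childSet, Finset.mem_filter] at hu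
  intro he
  rw [he, SimpleGraph.dist_self] at hu
  omega

private lemma pa_of_child (hT : G.IsTree) (r0 : V) {m u : V} (hu : u ∈ childSet G r0 m) :
    pa G r0 u = m := by
  have hur0 : u ≠ r0 := child_ne_root hT r0 hu
  have hpau := pa_spec hT r0 hur0
  rw [childSet, Finset.mem_filter, SimpleGraph.mem_neighborFinset] at hu
  obtain ⟨hadj, hd⟩ := hu
  exact parent_unique hT r0 hpau.1 hpau.2 hadj.symm (by omega)

private lemma idx_ne_sibling (hT : G.IsTree) (r0 : V) {m u w : V}
    (hu : u ∈ childSet G r0 m) (hw : w ∈ childSet G r0 m) (hne : u ≠ w) :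
    idx G hT r0 u ≠ idx G hT r0 w := by
  have hur0 : u ≠ r0 := child_ne_root hT r0 hu
  have hwr0 : w ≠ r0 := child_ne_root hT r0 hw
  have hpau : pa G r0 u = m := pa_of_child hT r0 hu
  have hpaw : pa G r0 w = m := pa_of_child hT r0 hw
  rw [idx_eq hT r0 hur0, idx_eq hT r0 hwr0, hpau, hpaw]
  intro heq
  exact hne (injc_inj (cond_any hT r0 m
    (if m = r0 then G.maxDegree else idx G hT r0 (pa G r0 m)) (fun hm => if_pos hm)) hu hw heq)

private lemma idx_ne_grandparent (hT : G.IsTree) (r0 : V) {u m : V}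
    (hu : u ∈ childSet G r0 m) (hm : m ≠ r0) :
    idx G hT r0 u ≠ idx G hT r0 (pa G r0 m) := by
  have hur0 : u ≠ r0 := child_ne_root hT r0 hu
  have hpau : pa G r0 u = m := pa_of_child hT r0 hu
  rw [idx_eq hT r0 hur0, hpau, if_neg hm]
  have hmem := injc_mem (cond_any hT r0 m (idx G hT r0 (pa G r0 m))
    (fun hmm => absurd hmm hm)) hu
  exact (Finset.mem_erase.mp hmem).1

private lemma mid2 (hT : G.IsTree) {u v : V} (hd : G.dist u v = 2) :
    ∃ m, G.Adj u m ∧ G.Adj m v := by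
  obtain ⟨w, hwl⟩ := hT.isConnected.exists_walk_length_eq_dist u v
  rw [hd] at hwl
  cases w with
  | nil => simp at hwl
  | cons h1 q =>
    cases q with
    | nil => simp at hwl
    | cons h2 q2 =>
      have hz : q2.length = 0 := by simpa using hwl
      have he := Walk.eq_of_length_eq_zero hz
      subst he
      exact ⟨_, h1, h2⟩

private lemma idx_ne_dist2 (hT : G.IsTree) (r0 : V) {u v : V} (hd : G.dist u v = 2) :
    idx G hT r0 u ≠ idx G hT r0 v := by
  obtain ⟨m, h1, h2⟩ := mid2 hT hd
  have hune : u ≠ v := by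
    intro he; rw [he, SimpleGraph.dist_self] at hd; omega
  rcases adj_depth hT r0 h1 with hdu | hdu <;> rcases adj_depth hT r0 h2 with hdv | hdv
  · -- dist m = dist u + 1, dist v = dist m + 1 : u = pa m, v child of m
    have hm : m ≠ r0 := by
      intro he; rw [he, SimpleGraph.dist_self] at hdu; omega
    have hpam := pa_spec hT r0 hm
    have hueq : u = pa G r0 m := parent_unique hT r0 h1.symm (by omega) hpam.1 hpam.2
    have hvchild : v ∈ childSet G r0 m := by
      rw [childSet, Finset.mem_filter, SimpleGraph.mem_neighborFinset]
      exact ⟨h2, hdv⟩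
    rw [hueq]
    exact (idx_ne_grandparent hT r0 hvchild hm).symm
  · -- dist m = dist u + 1, dist m = dist v + 1 : both parents of m : u = v
    exact absurd (parent_unique hT r0 h1.symm (by omega) h2 (by omega)) hune
  · -- dist u = dist m + 1, dist v = dist m + 1 : siblings
    have huchild : u ∈ childSet G r0 m := by
      rw [childSet, Finset.mem_filter, SimpleGraph.mem_neighborFinset]
      exact ⟨h1.symm, hdu⟩
    have hvchild : v ∈ childSet G r0 m := by
      rw [childSet, Finset.mem_filter, SimpleGraph.mem_neighborFinset]
      exact ⟨h2, hdv⟩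
    exact idx_ne_sibling hT r0 huchild hvchild hune
  · -- dist u = dist m + 1, dist m = dist v + 1 : u child of m, v = pa m
    have hm : m ≠ r0 := by
      intro he; rw [he, SimpleGraph.dist_self] at hdv; omega
    have hpam := pa_spec hT r0 hm
    have hveq : v = pa G r0 m := parent_unique hT r0 h2 (by omega) hpam.1 hpam.2
    have huchild : u ∈ childSet G r0 m := by
      rw [childSet, Finset.mem_filter, SimpleGraph.mem_neighborFinset]
      exact ⟨h1.symm, hdu⟩
    rw [hveq]
    exact idx_ne_grandparent hT r0 huchild hm

end Aux3

private lemma exists_elegant {V : Type} [Fintype V] (G : SimpleGraph V) [DecidableRel G.Adj]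
    (hT : G.IsTree) (hne : Nonempty V) (hΔ : 1 ≤ G.maxDegree) (h p : ℕ) (hp : 1 ≤ p)
    (hph : p ≤ h) :
    ∃ f : V → ℕ, IsElegantLLabelling G h p (h + 2 * (G.maxDegree - 1) * p) f := by
  classical
  obtain ⟨r0⟩ := hne
  set Δ := G.maxDegree with hΔdef
  set B := (Δ - 1) * p with hBdef
  have hℓB : h + 2 * (Δ - 1) * p = h + B + B := by rw [hBdef]; ring
  set f : V → ℕ :=
    fun v => if G.dist r0 v % 2 = 0 then p * idx G hT r0 v else h + B + p * idx G hT r0 v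
    with hfdef
  have hidx : ∀ v, p * idx G hT r0 v ≤ B := by
    intro v
    have h1 : idx G hT r0 v ≤ Δ - 1 := by have := idx_lt hT r0 hΔ v; omega
    calc p * idx G hT r0 v ≤ p * (Δ - 1) := Nat.mul_le_mul_left p h1
      _ = B := by rw [hBdef, Nat.mul_comm]
  have heven : ∀ v, G.dist r0 v % 2 = 0 → f v = p * idx G hT r0 v := by
    intro v hv; simp only [hfdef]; rw [if_pos hv]
  have hodd : ∀ v, ¬(G.dist r0 v % 2 = 0) → f v = h + B + p * idx G hT r0 v := by
    intro v hv; simp only [hfdef]; rw [if_neg hv]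
  have hfb : ∀ v, f v ≤ h + 2 * (Δ - 1) * p := by
    intro v
    have h1 := hidx v
    rw [hℓB]
    by_cases hv : G.dist r0 v % 2 = 0
    · rw [heven v hv]; omega
    · rw [hodd v hv]; omega
  have habs2 : ∀ a b : ℕ, (a + h ≤ b ∨ b + h ≤ a) → (h : ℤ) ≤ |(a : ℤ) - (b : ℤ)| := by
    intro a b hab
    rcases hab with hab | hab
    · rw [abs_of_nonpos (by omega : (a:ℤ) - b ≤ 0)]; omega
    · rw [abs_of_nonneg (by omega : (0:ℤ) ≤ (a:ℤ) - b)]; omega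
  have hopp : ∀ u v : V, G.dist r0 u % 2 ≠ G.dist r0 v % 2 → (h : ℤ) ≤ |(f u : ℤ) - (f v : ℤ)| := by
    intro u v hne2
    apply habs2
    by_cases hu : G.dist r0 u % 2 = 0
    · have hv : ¬(G.dist r0 v % 2 = 0) := fun hv => hne2 (hu.trans hv.symm)
      rw [heven u hu, hodd v hv]
      have := hidx u
      left; omega
    · have hv : G.dist r0 v % 2 = 0 := by omega
      rw [hodd u hu, heven v hv]
      have := hidx v
      right; omega
  have hd2 : ∀ u v : V, G.dist u v = 2 → (p : ℤ) ≤ |(f u : ℤ) - (f v : ℤ)| := by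
    intro u v hd
    have hparf := dist_parity hT r0 u v
    have hpar : G.dist r0 u % 2 = G.dist r0 v % 2 := by omega
    have hne3 := idx_ne_dist2 hT r0 hd
    have hdiff : (f u : ℤ) - f v = (p : ℤ) * ((idx G hT r0 u : ℤ) - idx G hT r0 v) := by
      by_cases hu : G.dist r0 u % 2 = 0
      · rw [heven u hu, heven v (by omega)]; push_cast; ring
      · rw [hodd u hu, hodd v (by omega)]; push_cast; ring
    rw [hdiff, abs_mul, abs_of_nonneg (by positivity : (0:ℤ) ≤ (p : ℤ))]
    have h1 : (1 : ℤ) ≤ |(idx G hT r0 u : ℤ) - idx G hT r0 v| := by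
      have h2 : (idx G hT r0 u : ℤ) ≠ idx G hT r0 v := by exact_mod_cast hne3
      rcases abs_cases ((idx G hT r0 u : ℤ) - idx G hT r0 v) with ⟨he, _⟩ | ⟨he, _⟩ <;> omega
    calc (p : ℤ) = p * 1 := by ring
      _ ≤ (p : ℤ) * |(idx G hT r0 u : ℤ) - idx G hT r0 v| := by
          apply mul_le_mul_of_nonneg_left h1 (by positivity)
  have hlab : IsLLabelling G h p (h + 2 * (Δ - 1) * p) f := by
    refine ⟨hfb, ?_, ?_⟩
    · intro u v hd
      have hadj := dist_eq_one_iff_adj.mp hd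
      rcases adj_depth hT r0 hadj with hc | hc <;> exact hopp u v (by omega)
    · intro u v hd
      rcases hd with hd | hd
      · exact hd2 u v hd
      · have hparf := dist_parity hT r0 u v
        refine le_trans (by exact_mod_cast hph) (hopp u v (by omega))
  -- elegance
  set nn := h + 2 * (Δ - 1) * p + 1 with hnn
  set Ie : Set (ZMod nn) := {x | ∃ i : ℕ, i ≤ B ∧ x = ((0 : ℕ) : ZMod nn) + (i : ZMod nn)}
    with hIe
  set Io : Set (ZMod nn) := {x | ∃ i : ℕ, i ≤ B ∧ x = (((h + B : ℕ)) : ZMod nn) + (i : ZMod nn)}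
    with hIo
  have hval : ∀ a : ℕ, a ≤ h + 2 * (Δ - 1) * p → ((a : ZMod nn)).val = a := by
    intro a ha
    apply ZMod.val_cast_of_lt
    omega
  have hdisj : Ie ∩ Io = ∅ := by
    ext x
    simp only [hIe, hIo, Set.mem_inter_iff, Set.mem_setOf_eq, Set.mem_empty_iff_false, iff_false,
      not_and]
    rintro ⟨i, hi, rfl⟩ ⟨j, hj, hx⟩
    have hx' : ((i : ℕ) : ZMod nn) = ((h + B + j : ℕ) : ZMod nn) := by
      push_cast
      push_cast at hx
      linear_combination hx
    have hv1 := hval i (by omega)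
    have hv2 := hval (h + B + j) (by omega)
    rw [hx', hv2] at hv1
    omega
  refine ⟨f, hlab, fun v => if G.dist r0 v % 2 = 0 then Io else Ie, ?_, ?_, ?_⟩
  · intro u
    dsimp only
    by_cases hu : G.dist r0 u % 2 = 0
    · rw [if_pos hu]
      exact ⟨(((h + B : ℕ)) : ZMod nn), B, hIo⟩
    · rw [if_neg hu]
      exact ⟨((0 : ℕ) : ZMod nn), B, hIe⟩
  · intro u w hadj
    dsimp only
    have hpar : G.dist r0 u % 2 ≠ G.dist r0 w % 2 := by
      rcases adj_depth hT r0 hadj with hc | hc <;> omega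
    by_cases hu : G.dist r0 u % 2 = 0
    · rw [if_pos hu]
      have hw : ¬(G.dist r0 w % 2 = 0) := by omega
      rw [hodd w hw, hIo]
      refine ⟨p * idx G hT r0 w, hidx w, ?_⟩
      push_cast
      ring
    · rw [if_neg hu]
      have hw : G.dist r0 w % 2 = 0 := by omega
      rw [heven w hw, hIe]
      refine ⟨p * idx G hT r0 w, hidx w, ?_⟩
      push_cast
      ring
  · intro u v hadj
    dsimp only
    have hpar : G.dist r0 u % 2 ≠ G.dist r0 v % 2 := by
      rcases adj_depth hT r0 hadj with hc | hc <;> omega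
    by_cases hu : G.dist r0 u % 2 = 0
    · rw [if_pos hu, if_neg (by omega : ¬(G.dist r0 v % 2 = 0))]
      rw [Set.inter_comm]
      exact hdisj
    · rw [if_neg hu, if_pos (by omega : G.dist r0 v % 2 = 0)]
      exact hdisj

private lemma maxDeg_ge_two {V : Type} [Fintype V] (G : SimpleGraph V) [DecidableRel G.Adj]
    (hT : G.IsTree) {u v : V} (hd : 3 ≤ G.dist u v) : 2 ≤ G.maxDegree := by
  classical
  obtain ⟨w, hwp, hwl⟩ := hT.isConnected.exists_path_of_dist u v
  cases w with
  | nil => simp at hwl; rw [SimpleGraph.dist_self] at hd; omega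
  | cons h1 q =>
    cases q with
    | nil => simp at hwl; omega
    | cons h2 q2 =>
      rename_i a b
      rw [Walk.cons_isPath_iff] at hwp
      have husup := hwp.2
      have hub : u ≠ b := by
        intro he
        apply husup
        rw [Walk.support_cons, he]
        exact List.mem_cons_of_mem _ q2.start_mem_support
      have hsub : ({u, b} : Finset V) ⊆ G.neighborFinset a := by
        intro x hx
        rcases Finset.mem_insert.mp hx with rfl | hx
        · exact (SimpleGraph.mem_neighborFinset G a x).mpr h1.symm
        · rw [Finset.mem_singleton] at hx
          subst hx
          exact (SimpleGraph.mem_neighborFinset G a x).mpr h2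
      have hcard : ({u, b} : Finset V).card = 2 := by
        rw [Finset.card_insert_of_notMem (by simp [hub]), Finset.card_singleton]
      have hdeg : 2 ≤ G.degree a := by
        rw [← SimpleGraph.card_neighborFinset_eq_degree, ← hcard]
        exact Finset.card_le_card hsub
      exact le_trans hdeg (G.degree_le_maxDegree a)

theorem stmt3 {V : Type} [Fintype V] (G : SimpleGraph V) [DecidableRel G.Adj]
    (hT : G.IsTree) (hdiam : ∃ u v : V, 3 ≤ G.dist u v)
    (hsub : ∃ r : V, G.maxDegree - 1 ≤
      ((G.neighborFinset r).filter (fun v => G.degree v = G.maxDegree)).card)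
    (h p : ℕ) (hp : 1 ≤ p) (hph : p ≤ h) :
    h + (2 * G.maxDegree - 3) * p ≤ lambdaNum G h p ∧
    lambdaNum G h p ≤ lambdaStar G h p ∧
    lambdaStar G h p ≤ h + 2 * (G.maxDegree - 1) * p := by
  classical
  obtain ⟨du, dv, hdiam3⟩ := hdiam
  have hΔ2 : 2 ≤ G.maxDegree := maxDeg_ge_two G hT hdiam3
  have hV : Nonempty V := ⟨du⟩
  obtain ⟨f0, hf0⟩ := exists_elegant G hT hV (by omega) h p hp hph
  have hSstar : (h + 2 * (G.maxDegree - 1) * p) ∈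
      {ℓ : ℕ | ∃ f : V → ℕ, IsElegantLLabelling G h p ℓ f} := ⟨f0, hf0⟩
  have hstar_le : lambdaStar G h p ≤ h + 2 * (G.maxDegree - 1) * p := Nat.sInf_le hSstar
  have hstar_mem : lambdaStar G h p ∈ {ℓ : ℕ | ∃ f : V → ℕ, IsElegantLLabelling G h p ℓ f} :=
    Nat.sInf_mem ⟨_, hSstar⟩
  obtain ⟨f1, hf1⟩ := hstar_mem
  have hlam_le : lambdaNum G h p ≤ lambdaStar G h p := Nat.sInf_le ⟨f1, hf1.1⟩
  have hlam_mem : lambdaNum G h p ∈ {ℓ : ℕ | ∃ f : V → ℕ, IsLLabelling G h p ℓ f} :=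
    Nat.sInf_mem ⟨lambdaStar G h p, f1, hf1.1⟩
  obtain ⟨f2, hf2⟩ := hlam_mem
  exact ⟨lower_per hT hsub hΔ2 h p _ hp hph f2 hf2, hlam_le, hstar_le⟩
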